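/- Let φ : 𝒫_c → 𝒫_c preserve the transition probability, and let P₁, P₂, Q ∈ 𝒫_c with P₁P₂ = 0. Then Q ≤ P₁ + P₂ if and only if φ(Q) ≤ φ(P₁) + φ(P₂). -/

import Mathlib

open Matrix


/-- `𝒫_c`: projections of trace `c` in `M_n(ℂ)`. -/
def MemGrassmann (n c : ℕ) (P : Matrix (Fin n) (Fin n) ℂ) : Prop :=
  P.IsHermitian ∧ P * P = P ∧ P.trace = (c : ℂ)

lemma trace_conjT_mul_self_eq_zero {n : ℕ} (A : Matrix (Fin n) (Fin n) ℂ)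
    (h : (Aᴴ * A).trace = 0) : A = 0 := by
  have hre : ∑ i, ∑ j, Complex.normSq (A j i) = 0 := by
    have := congrArg Complex.re h
    simpa [Matrix.trace, Matrix.diag, Matrix.mul_apply, Matrix.conjTranspose_apply,
      Complex.normSq_eq_conj_mul_self, Complex.normSq_apply] using this
  have hz : ∀ i ∈ Finset.univ, ∀ j ∈ Finset.univ, Complex.normSq (A j i) = 0 := by
    have h1 := (Finset.sum_eq_zero_iff_of_nonneg (fun i _ =>
      Finset.sum_nonneg fun j _ => Complex.normSq_nonneg _)).mp hre
    intro i hi j hj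
    exact (Finset.sum_eq_zero_iff_of_nonneg (fun j _ => Complex.normSq_nonneg _)).mp
      (h1 i hi) j hj
  ext p q
  simpa using Complex.normSq_eq_zero.mp (hz q (by simp) p (by simp))

/-- For projections `Q` and `R`, with `tr Q = c`: `Q ≤ R ↔ tr (Q R) = c`. -/
lemma le_iff_trace {n c : ℕ} {Q R : Matrix (Fin n) (Fin n) ℂ}
    (hQh : Q.IsHermitian) (hQ2 : Q * Q = Q) (hQt : Q.trace = (c : ℂ))
    (hRh : R.IsHermitian) (hR2 : R * R = R) :
    Q * R = Q ↔ (Q * R).trace = (c : ℂ) := by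
  constructor
  · intro h; rw [h, hQt]
  · intro h
    set A := (1 - R) * Q with hA
    have hAT : Aᴴ = Q * (1 - R) := by
      rw [hA, Matrix.conjTranspose_mul, Matrix.conjTranspose_sub, Matrix.conjTranspose_one,
        hQh.eq, hRh.eq]
    have h1R : (1 - R) * (1 - R) = 1 - R := by
      simp [Matrix.sub_mul, Matrix.mul_sub, hR2]
    have hAA : Aᴴ * A = Q - Q * R * Q := by
      rw [hAT, hA, Matrix.mul_assoc, ← Matrix.mul_assoc (1 - R), h1R, ← Matrix.mul_assoc,
        Matrix.mul_sub, Matrix.mul_one, Matrix.sub_mul, hQ2]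
    have htr : (Aᴴ * A).trace = 0 := by
      rw [hAA, Matrix.trace_sub, hQt]
      have : (Q * R * Q).trace = (Q * R).trace := by
        rw [Matrix.trace_mul_comm, ← Matrix.mul_assoc, hQ2]
      rw [this, h, sub_self]
    have hA0 : A = 0 := trace_conjT_mul_self_eq_zero A htr
    have hRQ : R * Q = Q := by
      have h0 : Q - R * Q = 0 := by
        have := hA0
        rwa [hA, Matrix.sub_mul, Matrix.one_mul] at this
      have := sub_eq_zero.mp h0
      exact this.symm
    calc Q * R = (R * Q)ᴴ := by rw [Matrix.conjTranspose_mul, hQh.eq, hRh.eq]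
    _ = Qᴴ := by rw [hRQ]
    _ = Q := hQh.eq

theorem stmt4 {n c : ℕ} (hc0 : 0 < c) (hcn : c < n)
    (φ : Matrix (Fin n) (Fin n) ℂ → Matrix (Fin n) (Fin n) ℂ)
    (hmap : ∀ P, MemGrassmann n c P → MemGrassmann n c (φ P))
    (hpres : ∀ P Q, MemGrassmann n c P → MemGrassmann n c Q →
      (φ P * φ Q).trace = (P * Q).trace)
    (P₁ P₂ Q : Matrix (Fin n) (Fin n) ℂ)
    (hP₁ : MemGrassmann n c P₁) (hP₂ : MemGrassmann n c P₂) (hQ : MemGrassmann n c Q)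
    (horth : P₁ * P₂ = 0) :
    Q * (P₁ + P₂) = Q ↔ φ Q * (φ P₁ + φ P₂) = φ Q := by
  obtain ⟨h1h, h12, h1t⟩ := hP₁
  obtain ⟨h2h, h22, h2t⟩ := hP₂
  obtain ⟨hQh, hQ2, hQt⟩ := hQ
  obtain ⟨f1h, f12, f1t⟩ := hmap P₁ ⟨h1h, h12, h1t⟩
  obtain ⟨f2h, f22, f2t⟩ := hmap P₂ ⟨h2h, h22, h2t⟩
  obtain ⟨fQh, fQ2, fQt⟩ := hmap Q ⟨hQh, hQ2, hQt⟩
  -- orthogonality of images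
  have htr12 : (φ P₁ * φ P₂).trace = 0 := by
    rw [hpres P₁ P₂ ⟨h1h, h12, h1t⟩ ⟨h2h, h22, h2t⟩, horth, Matrix.trace_zero]
  have horthφ : φ P₁ * φ P₂ = 0 := by
    set A := φ P₂ * φ P₁ with hA
    have : Aᴴ * A = φ P₁ * (φ P₂ * φ P₁) := by
      rw [hA, Matrix.conjTranspose_mul, f1h.eq, f2h.eq, Matrix.mul_assoc, ← Matrix.mul_assoc (φ P₂),
        f22]
    have hz : (Aᴴ * A).trace = 0 := by
      rw [this, ← Matrix.mul_assoc, Matrix.trace_mul_comm, ← Matrix.mul_assoc, f12, htr12]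
    have hA0 : A = 0 := trace_conjT_mul_self_eq_zero A hz
    calc φ P₁ * φ P₂ = Aᴴ := by rw [hA, Matrix.conjTranspose_mul, f1h.eq, f2h.eq]
    _ = 0 := by rw [hA0]; simp
  have horthφ' : φ P₂ * φ P₁ = 0 := by
    calc φ P₂ * φ P₁ = (φ P₁ * φ P₂)ᴴ := by
          rw [Matrix.conjTranspose_mul, f1h.eq, f2h.eq]
    _ = 0 := by rw [horthφ]; simp
  have horth' : P₂ * P₁ = 0 := by
    calc P₂ * P₁ = (P₁ * P₂)ᴴ := by rw [Matrix.conjTranspose_mul, h1h.eq, h2h.eq]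
    _ = 0 := by rw [horth]; simp
  -- sums are projections
  have hRh : (P₁ + P₂).IsHermitian := h1h.add h2h
  have hR2 : (P₁ + P₂) * (P₁ + P₂) = P₁ + P₂ := by
    simp [Matrix.add_mul, Matrix.mul_add, h12, h22, horth, horth']
  have hSh : (φ P₁ + φ P₂).IsHermitian := f1h.add f2h
  have hS2 : (φ P₁ + φ P₂) * (φ P₁ + φ P₂) = φ P₁ + φ P₂ := by
    simp [Matrix.add_mul, Matrix.mul_add, f12, f22, horthφ, horthφ']
  have htreq : (Q * (P₁ + P₂)).trace = (φ Q * (φ P₁ + φ P₂)).trace := by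
    rw [Matrix.mul_add, Matrix.mul_add, Matrix.trace_add, Matrix.trace_add,
      hpres Q P₁ ⟨hQh, hQ2, hQt⟩ ⟨h1h, h12, h1t⟩, hpres Q P₂ ⟨hQh, hQ2, hQt⟩ ⟨h2h, h22, h2t⟩]
  rw [le_iff_trace hQh hQ2 hQt hRh hR2, le_iff_trace fQh fQ2 fQt hSh hS2, htreq]
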